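/- Suppose λ ∈ ℂ, α < 0, μ > −3α, and u : [0,1] → ℂ is a nontrivial H² solution of λu − μu'' = 0 on (0,1) with u(1) = 0 and μu'(0) − αu(0) = 0. Then Re λ ≤ −(μ + 3α) < 0. -/

import Mathlib

open MeasureTheory intervalIntegral Set Complex

private lemma cs_aux (f : ℝ → ℝ) (hf : Continuous f) (a b : ℝ) (hab : a ≤ b) :
    (∫ x in a..b, f x) ^ 2 ≤ (b - a) * ∫ x in a..b, (f x) ^ 2 := by
  rcases eq_or_lt_of_le hab with h | h
  · subst h; simp
  · have hL0 : 0 < b - a := by linarith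
    set S := ∫ x in a..b, f x with hS
    set T := ∫ x in a..b, (f x) ^ 2 with hT
    set c := S / (b - a) with hc
    have hint : IntervalIntegrable f volume a b := hf.intervalIntegrable a b
    have hint2 : IntervalIntegrable (fun x => (f x) ^ 2) volume a b :=
      (hf.pow 2).intervalIntegrable a b
    have h0 : 0 ≤ ∫ x in a..b, (f x - c) ^ 2 :=
      intervalIntegral.integral_nonneg hab (fun x _ => sq_nonneg _)
    have h1 : ∫ x in a..b, (f x - c) ^ 2 = T - 2 * c * S + (b - a) * c ^ 2 := by
      have key : ∀ x : ℝ, (f x - c) ^ 2 = (f x) ^ 2 - (2 * c) * f x + c ^ 2 := fun x => by ring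
      calc ∫ x in a..b, (f x - c) ^ 2
          = ∫ x in a..b, ((f x) ^ 2 - (2 * c) * f x + c ^ 2) := by
            apply intervalIntegral.integral_congr; intro x _; exact key x
        _ = (∫ x in a..b, ((f x) ^ 2 - (2 * c) * f x)) + ∫ x in a..b, (c ^ 2 : ℝ) := by
            apply intervalIntegral.integral_add (hint2.sub (hint.const_mul (2 * c)))
              intervalIntegrable_const
        _ = T - 2 * c * S + (b - a) * c ^ 2 := by
            rw [intervalIntegral.integral_sub hint2 (hint.const_mul (2 * c)),
              intervalIntegral.integral_const_mul, intervalIntegral.integral_const]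
            simp only [smul_eq_mul]
            rfl
    rw [h1, hc] at h0
    have h2 : 0 ≤ T - S ^ 2 / (b - a) := by
      have e : T - 2 * (S / (b - a)) * S + (b - a) * (S / (b - a)) ^ 2 = T - S ^ 2 / (b - a) := by
        field_simp; ring
      linarith [e ▸ h0]
    rw [le_sub_iff_add_le, zero_add, div_le_iff₀ hL0] at h2
    linarith [h2]

theorem stmt_6 (lam : ℂ) (μ α : ℝ) (hα : α < 0) (hμ : -3 * α < μ)
    (u : ℝ → ℂ) (hu : ContDiff ℝ 2 u)
    (hnt : ∃ y ∈ Set.Icc (0:ℝ) 1, u y ≠ 0)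
    (heq : ∀ y ∈ Set.Ioo (0:ℝ) 1, lam * u y - (μ : ℂ) * deriv (deriv u) y = 0)
    (hbc1 : u 1 = 0)
    (hbc0 : (μ : ℂ) * deriv u 0 - (α : ℂ) * u 0 = 0) :
    lam.re ≤ -(μ + 3 * α) ∧ -(μ + 3 * α) < 0 := by
  have hμ0 : 0 < μ := by linarith
  set v := deriv u with hv_def
  set w := deriv v with hw_def
  -- regularity
  have hudiff : Differentiable ℝ u := hu.differentiable (by norm_num)
  have hv1 : ContDiff ℝ 1 v := (contDiff_succ_iff_deriv.mp (show ContDiff ℝ (1+1) u from hu)).2.2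
  have hvdiff : Differentiable ℝ v := hv1.differentiable (by norm_num)
  have hwcont : Continuous w := (contDiff_one_iff_deriv.mp hv1).2
  have hucont : Continuous u := hu.continuous
  have hvcont : Continuous v := hv1.continuous
  have hud : ∀ y, HasDerivAt u (v y) y := fun y => (hudiff y).hasDerivAt
  have hvd : ∀ y, HasDerivAt v (w y) y := fun y => (hvdiff y).hasDerivAt
  set A := ∫ y in (0:ℝ)..1, Complex.normSq (u y) with hA_def
  set B := ∫ y in (0:ℝ)..1, Complex.normSq (v y) with hB_def
  have hnsu_cont : Continuous fun y => Complex.normSq (u y) := Complex.continuous_normSq.comp hucont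
  have hnsv_cont : Continuous fun y => Complex.normSq (v y) := Complex.continuous_normSq.comp hvcont
  -- A > 0
  have hA_pos : 0 < A := by
    obtain ⟨y₀, hy₀, hne⟩ := hnt
    have hy₀1 : y₀ < 1 := lt_of_le_of_ne hy₀.2 (fun h => hne (h ▸ hbc1))
    have hfy₀ : 0 < Complex.normSq (u y₀) := Complex.normSq_pos.mpr hne
    have hmem : {y : ℝ | 0 < Complex.normSq (u y)} ∈ nhds y₀ :=
      (isOpen_lt continuous_const hnsu_cont).mem_nhds hfy₀
    obtain ⟨δ, hδ, hball⟩ := Metric.mem_nhds_iff.mp hmem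
    set b := min 1 (y₀ + δ / 2) with hb_def
    have hy₀b : y₀ < b := lt_min hy₀1 (by linarith)
    have hb1 : b ≤ 1 := min_le_left _ _
    have hmid : 0 < ∫ y in y₀..b, Complex.normSq (u y) := by
      apply intervalIntegral_pos_of_pos_on (hnsu_cont.intervalIntegrable _ _)
      · intro x hx
        apply hball
        rw [Metric.mem_ball, Real.dist_eq, abs_lt]
        have hxb : x < y₀ + δ / 2 := lt_of_lt_of_le hx.2 (min_le_right _ _)
        constructor <;> [linarith [hx.1]; linarith [hx.2]]
      · exact hy₀b
    have hsplit : A = (∫ y in (0:ℝ)..y₀, Complex.normSq (u y))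
        + (∫ y in y₀..b, Complex.normSq (u y)) + ∫ y in b..(1:ℝ), Complex.normSq (u y) := by
      rw [hA_def, intervalIntegral.integral_add_adjacent_intervals
          (hnsu_cont.intervalIntegrable _ _) (hnsu_cont.intervalIntegrable _ _),
        intervalIntegral.integral_add_adjacent_intervals
          (hnsu_cont.intervalIntegrable _ _) (hnsu_cont.intervalIntegrable _ _)]
    have h01 : 0 ≤ ∫ y in (0:ℝ)..y₀, Complex.normSq (u y) :=
      intervalIntegral.integral_nonneg hy₀.1 (fun x _ => Complex.normSq_nonneg _)
    have h02 : 0 ≤ ∫ y in b..(1:ℝ), Complex.normSq (u y) :=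
      intervalIntegral.integral_nonneg hb1 (fun x _ => Complex.normSq_nonneg _)
    rw [hsplit]; linarith
  -- Poincaré: A ≤ B
  have hBnonneg : 0 ≤ B :=
    intervalIntegral.integral_nonneg zero_le_one (fun x _ => Complex.normSq_nonneg _)
  have poin : A ≤ B := by
    have hbd : ∀ y ∈ Icc (0:ℝ) 1, Complex.normSq (u y) ≤ B := by
      intro y hy
      have hftc : ∫ t in y..1, v t = u 1 - u y :=
        integral_eq_sub_of_hasDerivAt (fun t _ => hud t) (hvcont.intervalIntegrable _ _)
      have h1 : ‖u y‖ = ‖∫ t in y..1, v t‖ := by rw [hftc, hbc1, zero_sub, norm_neg]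
      have h2 : ‖∫ t in y..1, v t‖ ≤ ∫ t in y..1, ‖v t‖ :=
        intervalIntegral.norm_integral_le_integral_norm hy.2
      have h3 : (∫ t in y..1, ‖v t‖) ^ 2 ≤ (1 - y) * ∫ t in y..1, ‖v t‖ ^ 2 :=
        cs_aux _ hvcont.norm y 1 hy.2
      have h4 : ∫ t in y..1, ‖v t‖ ^ 2 ≤ B := by
        have hsplit : B = (∫ t in (0:ℝ)..y, Complex.normSq (v t))
            + ∫ t in y..(1:ℝ), Complex.normSq (v t) := by
          rw [hB_def, intervalIntegral.integral_add_adjacent_intervals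
            (hnsv_cont.intervalIntegrable _ _) (hnsv_cont.intervalIntegrable _ _)]
        have he : ∫ t in y..(1:ℝ), ‖v t‖ ^ 2 = ∫ t in y..(1:ℝ), Complex.normSq (v t) := by
          apply intervalIntegral.integral_congr; intro t _
          simp [Complex.normSq_eq_norm_sq]
        have h0 : 0 ≤ ∫ t in (0:ℝ)..y, Complex.normSq (v t) :=
          intervalIntegral.integral_nonneg hy.1 (fun x _ => Complex.normSq_nonneg _)
        rw [he]; linarith
      have hnn : 0 ≤ ∫ t in y..1, ‖v t‖ :=
        intervalIntegral.integral_nonneg hy.2 (fun x _ => norm_nonneg _)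
      have h5 : ‖u y‖ ^ 2 ≤ (∫ t in y..1, ‖v t‖) ^ 2 := by
        apply pow_le_pow_left₀ (norm_nonneg _) (h1 ▸ h2)
      have h6 : (1 - y) * (∫ t in y..1, ‖v t‖ ^ 2) ≤ 1 * B := by
        apply mul_le_mul (by linarith [hy.1]) h4 _ zero_le_one
        exact intervalIntegral.integral_nonneg hy.2 (fun x _ => sq_nonneg _)
      have : Complex.normSq (u y) = ‖u y‖ ^ 2 := by
        rw [Complex.normSq_eq_norm_sq]
      linarith
    calc A ≤ ∫ _y in (0:ℝ)..1, B := by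
          apply intervalIntegral.integral_mono_on zero_le_one
            (hnsu_cont.intervalIntegrable _ _) intervalIntegrable_const hbd
      _ = B := by simp
  -- boundary estimate: normSq (u 0) ≤ A + B
  have hbound : Complex.normSq (u 0) ≤ A + B := by
    set q : ℝ → ℂ := fun y => v y * (starRingEnd ℂ) (u y) + u y * (starRingEnd ℂ) (v y) with hq_def
    have hqcont : Continuous fun y => (q y).re := by
      apply Complex.continuous_re.comp
      exact (hvcont.mul (continuous_star.comp hucont)).add (hucont.mul (continuous_star.comp hvcont))
    have hp : ∀ y : ℝ, HasDerivAt (fun t => Complex.normSq (u t)) ((q y).re) y := by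
      intro y
      have hprod : HasDerivAt (fun t => u t * (starRingEnd ℂ) (u t)) (q y) y := by
        have := (hud y).mul ((hud y).star)
        simpa [hq_def, Complex.star_def, mul_comm, add_comm, Pi.mul_def] using this
      have hre := Complex.reCLM.hasFDerivAt.comp_hasDerivAt y hprod
      simpa [Function.comp_def, Complex.mul_conj] using hre
    have hftc : ∫ y in (0:ℝ)..1, (q y).re
        = Complex.normSq (u 1) - Complex.normSq (u 0) :=
      integral_eq_sub_of_hasDerivAt (fun t _ => hp t) (hqcont.intervalIntegrable _ _)
    have hptw : ∀ y : ℝ, -(q y).re ≤ Complex.normSq (u y) + Complex.normSq (v y) := by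
      intro y
      have := sq_nonneg ((u y).re + (v y).re)
      have := sq_nonneg ((u y).im + (v y).im)
      simp only [hq_def, Complex.add_re, Complex.mul_re, Complex.conj_re, Complex.conj_im,
        Complex.normSq_apply]
      nlinarith
    have hmono : ∫ y in (0:ℝ)..1, -(q y).re
        ≤ ∫ y in (0:ℝ)..1, (Complex.normSq (u y) + Complex.normSq (v y)) := by
      apply intervalIntegral.integral_mono_on zero_le_one (hqcont.neg.intervalIntegrable _ _)
        ((hnsu_cont.add hnsv_cont).intervalIntegrable _ _) (fun y _ => hptw y)
    rw [intervalIntegral.integral_neg, hftc,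
      intervalIntegral.integral_add (hnsu_cont.intervalIntegrable _ _)
        (hnsv_cont.intervalIntegrable _ _)] at hmono
    rw [hbc1] at hmono
    simpa using hmono
  -- energy identity
  have energy : lam.re * A = -(α * Complex.normSq (u 0)) - μ * B := by
    have heqIcc : ∀ y ∈ Icc (0:ℝ) 1, lam * u y = (μ:ℂ) * w y := by
      have h : EqOn (fun y => lam * u y) (fun y => (μ:ℂ) * w y) (closure (Ioo (0:ℝ) 1)) := by
        apply Set.EqOn.closure (fun y hy => sub_eq_zero.mp (heq y hy))
          (continuous_const.mul hucont) (continuous_const.mul hwcont)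
      rw [closure_Ioo (by norm_num : (0:ℝ) ≠ 1)] at h
      exact h
    -- FTC for v * conj u
    have hFderiv : ∀ y : ℝ, HasDerivAt (fun t => v t * (starRingEnd ℂ) (u t))
        (w y * (starRingEnd ℂ) (u y) + v y * (starRingEnd ℂ) (v y)) y := by
      intro y
      have := (hvd y).mul ((hud y).star)
      simpa [Complex.star_def, Pi.mul_def] using this
    have hFint : IntervalIntegrable
        (fun y => w y * (starRingEnd ℂ) (u y) + v y * (starRingEnd ℂ) (v y)) volume 0 1 :=
      ((hwcont.mul (continuous_star.comp hucont)).add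
        (hvcont.mul (continuous_star.comp hvcont))).intervalIntegrable _ _
    have hftc2 : ∫ y in (0:ℝ)..1, (w y * (starRingEnd ℂ) (u y) + v y * (starRingEnd ℂ) (v y))
        = v 1 * (starRingEnd ℂ) (u 1) - v 0 * (starRingEnd ℂ) (u 0) :=
      integral_eq_sub_of_hasDerivAt (fun t _ => hFderiv t) hFint
    have hBadd : ∫ y in (0:ℝ)..1, (w y * (starRingEnd ℂ) (u y) + v y * (starRingEnd ℂ) (v y))
        = (∫ y in (0:ℝ)..1, w y * (starRingEnd ℂ) (u y)) + (B : ℂ) := by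
      have hCwu : Continuous fun y => w y * (starRingEnd ℂ) (u y) := by
        exact hwcont.mul (continuous_star.comp hucont)
      have hCvv : Continuous fun y => v y * (starRingEnd ℂ) (v y) := by
        exact hvcont.mul (continuous_star.comp hvcont)
      rw [intervalIntegral.integral_add (hCwu.intervalIntegrable _ _)
        (hCvv.intervalIntegrable _ _)]
      congr 1
      rw [hB_def]
      rw [show (fun y => v y * (starRingEnd ℂ) (v y)) = fun y => ((Complex.normSq (v y) : ℝ) : ℂ)
        from funext fun y => Complex.mul_conj _]
      exact intervalIntegral.integral_ofReal
    have hI1 : ∫ y in (0:ℝ)..1, w y * (starRingEnd ℂ) (u y)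
        = -(v 0 * (starRingEnd ℂ) (u 0)) - (B : ℂ) := by
      rw [hBadd, hbc1] at hftc2
      simp only [map_zero, mul_zero, zero_sub] at hftc2
      linear_combination hftc2
    have hAC : ∫ y in (0:ℝ)..1, u y * (starRingEnd ℂ) (u y) = (A : ℂ) := by
      rw [hA_def]
      rw [show (fun y => u y * (starRingEnd ℂ) (u y)) = fun y => ((Complex.normSq (u y) : ℝ) : ℂ)
        from funext fun y => Complex.mul_conj _]
      exact intervalIntegral.integral_ofReal
    have hmain : lam * (A : ℂ) = (μ : ℂ) * (-(v 0 * (starRingEnd ℂ) (u 0)) - (B : ℂ)) := by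
      calc lam * (A : ℂ) = ∫ y in (0:ℝ)..1, lam * (u y * (starRingEnd ℂ) (u y)) := by
            rw [intervalIntegral.integral_const_mul, hAC]
        _ = ∫ y in (0:ℝ)..1, (μ:ℂ) * (w y * (starRingEnd ℂ) (u y)) := by
            apply intervalIntegral.integral_congr
            intro y hy
            rw [Set.uIcc_of_le zero_le_one] at hy
            have := heqIcc y hy
            simp only []
            rw [← mul_assoc, ← mul_assoc, this]
        _ = (μ : ℂ) * (-(v 0 * (starRingEnd ℂ) (u 0)) - (B : ℂ)) := by
            rw [intervalIntegral.integral_const_mul, hI1]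
    have hbc : (μ : ℂ) * (v 0 * (starRingEnd ℂ) (u 0)) = ((α * Complex.normSq (u 0) : ℝ) : ℂ) := by
      have h0 : (μ : ℂ) * v 0 = (α : ℂ) * u 0 := by linear_combination hbc0
      calc (μ : ℂ) * (v 0 * (starRingEnd ℂ) (u 0)) = ((μ : ℂ) * v 0) * (starRingEnd ℂ) (u 0) := by
            ring
        _ = (α : ℂ) * (u 0 * (starRingEnd ℂ) (u 0)) := by rw [h0]; ring
        _ = ((α * Complex.normSq (u 0) : ℝ) : ℂ) := by rw [Complex.mul_conj]; push_cast; ring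
    have hfinal : lam * (A : ℂ) = ((-(α * Complex.normSq (u 0)) - μ * B : ℝ) : ℂ) := by
      rw [hmain, mul_sub, mul_neg, hbc]
      push_cast
      ring
    have := congrArg Complex.re hfinal
    simpa [Complex.mul_re] using this
  -- combine
  have f1 : (α + μ) * A ≤ (α + μ) * B :=
    mul_le_mul_of_nonneg_left poin (by linarith)
  have f2 : (-α) * Complex.normSq (u 0) ≤ (-α) * (A + B) :=
    mul_le_mul_of_nonneg_left hbound (by linarith)
  constructor
  · have hkey : lam.re * A ≤ (-(μ + 3 * α)) * A := by nlinarith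
    exact le_of_mul_le_mul_right hkey hA_pos
  · linarith
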